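/- arXiv:1210.2457 — 2 statements merged into one kernel-verified Lean document; each statement's English description precedes it below -/
import Mathlib

section
/- Let G = (A, F0, F1) be a Muller game and G_S the associated safety game tracking Player 1's scores up to threshold 3, with f(v) = [v]. For every vertex v of G: if f(v) ∈ W_0(G_S) then v ∈ W_0(G). -/
variable {V : Type*}

/-- One step of the score/accumulator update: reading letter `v` after having
score/accumulator pair `s` for the set `F`. -/
def mgStep [DecidableEq V] (F : Finset V) (s : ℕ × Finset V) (v : V) : ℕ × Finset V :=
  if v ∈ F then
    if s.2 = F.erase v then (s.1 + 1, (∅ : Finset V)) else (s.1, insert v s.2)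
  else (0, (∅ : Finset V))

/-- `scoreAcc F w = (Score_F(w), Acc_F(w))` for a (nonempty) finite word `w`. -/
def scoreAcc [DecidableEq V] (F : Finset V) (w : List V) : ℕ × Finset V :=
  w.foldl (mgStep F) (0, ∅)

/-- `w ≤_𝓕 w'`. -/
def ScoreLe [DecidableEq V] (𝓕 : Set (Finset V)) (w w' : List V) : Prop :=
  w.getLast? = w'.getLast? ∧
    ∀ F ∈ 𝓕,
      (scoreAcc F w).1 < (scoreAcc F w').1 ∨
        ((scoreAcc F w).1 = (scoreAcc F w').1 ∧ (scoreAcc F w).2 ⊆ (scoreAcc F w').2)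

/-- `w =_𝓕 w'`. -/
def ScoreEq [DecidableEq V] (𝓕 : Set (Finset V)) (w w' : List V) : Prop :=
  ScoreLe 𝓕 w w' ∧ ScoreLe 𝓕 w' w

/-- An arena: a directed graph without terminal vertices, with the positions `V0`
of Player 0; Player 1's positions are the complement. -/
structure Arena (V : Type*) where
  V0 : Set V
  E : V → V → Prop
  succ : ∀ v, ∃ u, E v u

/-- The positions of Player `i`. -/
def Arena.pos (A : Arena V) (i : Fin 2) : Set V := if i = 0 then A.V0 else A.V0ᶜ

/-- An infinite play in the arena. -/
def IsPlay (A : Arena V) (ρ : ℕ → V) : Prop := ∀ n, A.E (ρ n) (ρ (n + 1))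

/-- The prefix `ρ_0 ⋯ ρ_{n-1}` (of length `n`) of an infinite word. -/
def prefixList (ρ : ℕ → V) (n : ℕ) : List V := (List.range n).map ρ

/-- The set of letters occurring infinitely often. -/
def infSet (ρ : ℕ → V) : Set V := {v | ∀ N, ∃ n, N ≤ n ∧ ρ n = v}

/-- The infinity set as a finset. -/
noncomputable def infFinset [Fintype V] (ρ : ℕ → V) : Finset V :=
  (Set.toFinite (infSet ρ)).toFinset

/-- A loop: a strongly connected subset, i.e. any two of its vertices are joined
by a path visiting only vertices of the set. -/
def IsLoop (A : Arena V) (C : Set V) : Prop :=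
  ∀ u ∈ C, ∀ u' ∈ C, Relation.ReflTransGen (fun a b => A.E a b ∧ a ∈ C ∧ b ∈ C) u u'

/-- A strategy, given as a function from (history, current vertex) to the next
vertex, which must move along an edge. -/
def IsStrat (A : Arena V) (σ : List V → V → V) : Prop := ∀ w v, A.E v (σ w v)

/-- A play consistent with the strategy `σ` of Player `i`. -/
def ConsWith (A : Arena V) (i : Fin 2) (σ : List V → V → V) (ρ : ℕ → V) : Prop :=
  IsPlay A ρ ∧ ∀ n, ρ n ∈ A.pos i → ρ (n + 1) = σ (prefixList ρ n) (ρ n)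

/-- The winning region of Player `i` in the Muller game on `A` with winning
families `Fam 0`, `Fam 1`. -/
def MullerWinRegion [Fintype V] [DecidableEq V] (A : Arena V)
    (Fam : Fin 2 → Set (Finset V)) (i : Fin 2) : Set V :=
  {v | ∃ σ, IsStrat A σ ∧ ∀ ρ, ρ 0 = v → ConsWith A i σ ρ → infFinset ρ ∈ Fam i}

/-- `MaxScore_𝓕(w) ≤ k`: every nonempty prefix of `w` has all its `𝓕`-scores at most `k`. -/
def MaxScoreLe [DecidableEq V] (𝓕 : Set (Finset V)) (w : List V) (k : ℕ) : Prop :=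
  ∀ F ∈ 𝓕, ∀ x : List V, x ≠ [] → x <+: w → (scoreAcc F x).1 ≤ k

/-- A (finite) play prefix in the arena. -/
def PlayPref (A : Arena V) (w : List V) : Prop := w ≠ [] ∧ List.Chain' A.E w

/-- Play prefixes in which Player 1's scores stay at most 2. -/
def PlaysLt3 [DecidableEq V] (A : Arena V) (F1 : Set (Finset V)) : Set (List V) :=
  {w | PlayPref A w ∧ MaxScoreLe F1 w 2}

/-- Play prefixes in which Player 1 just reached a score of 3. -/
def PlaysEq3 [DecidableEq V] (A : Arena V) (F1 : Set (Finset V)) : Set (List V) :=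
  {w | PlayPref A w ∧ ∃ x v, w = x ++ [v] ∧ MaxScoreLe F1 x 2 ∧
      MaxScoreLe F1 w 3 ∧ ¬MaxScoreLe F1 w 2}

def PlaysLe3 [DecidableEq V] (A : Arena V) (F1 : Set (Finset V)) : Set (List V) :=
  PlaysLt3 A F1 ∪ PlaysEq3 A F1

theorem ScoreLe.trans' [DecidableEq V] {𝓕 : Set (Finset V)} {a b c : List V}
    (h1 : ScoreLe 𝓕 a b) (h2 : ScoreLe 𝓕 b c) : ScoreLe 𝓕 a c := by
  refine ⟨h1.1.trans h2.1, fun F hF => ?_⟩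
  rcases h1.2 F hF with h | ⟨he, hs⟩ <;> rcases h2.2 F hF with h' | ⟨he', hs'⟩
  · exact Or.inl (h.trans h')
  · exact Or.inl (by omega)
  · exact Or.inl (by omega)
  · exact Or.inr ⟨by omega, hs.trans hs'⟩

/-- The `=_{F1}`-equivalence as a setoid on `Plays_{≤3}`. -/
def sgSetoid [DecidableEq V] (A : Arena V) (F1 : Set (Finset V)) :
    Setoid {w : List V // w ∈ PlaysLe3 A F1} where
  r a b := ScoreEq F1 a.1 b.1
  iseqv := by
    refine ⟨fun a => ⟨⟨rfl, fun F _ => Or.inr ⟨rfl, subset_rfl⟩⟩,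
        ⟨rfl, fun F _ => Or.inr ⟨rfl, subset_rfl⟩⟩⟩,
      fun h => ⟨h.2, h.1⟩, fun h h' => ⟨h.1.trans' h'.1, h'.2.trans' h.2⟩⟩

/-- Vertices of the safety game: `=_{F1}`-classes of `Plays_{≤3}`. -/
def SVert [DecidableEq V] (A : Arena V) (F1 : Set (Finset V)) :=
  Quotient (sgSetoid A F1)

/-- The (common) last vertex of the members of a class. -/
def sgLast [DecidableEq V] (A : Arena V) (F1 : Set (Finset V)) :
    SVert A F1 → Option V :=
  Quotient.lift (fun p => p.1.getLast?) (fun _ _ h => h.1.1)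

/-- Positions of Player 0 in the safety game: classes whose last vertex lies in `V0`. -/
def sgPos0 [DecidableEq V] (A : Arena V) (F1 : Set (Finset V)) : Set (SVert A F1) :=
  {a | ∃ v ∈ A.V0, sgLast A F1 a = some v}

/-- Positions of Player `i` in the safety game. -/
def sgPos [DecidableEq V] (A : Arena V) (F1 : Set (Finset V)) (i : Fin 2) :
    Set (SVert A F1) :=
  if i = 0 then sgPos0 A F1 else (sgPos0 A F1)ᶜ

/-- Edges of the safety game: from `[w]` to `[wv]` for `w ∈ Plays_{<3}` and
`(last w, v) ∈ E`. -/
def sgE [DecidableEq V] (A : Arena V) (F1 : Set (Finset V)) :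
    SVert A F1 → SVert A F1 → Prop := fun a b =>
  ∃ (w : List V) (hw : w ∈ PlaysLe3 A F1) (v : V) (hwv : w ++ [v] ∈ PlaysLe3 A F1)
    (u : V), w ∈ PlaysLt3 A F1 ∧ w.getLast? = some u ∧ A.E u v ∧
      a = Quotient.mk (sgSetoid A F1) ⟨w, hw⟩ ∧
      b = Quotient.mk (sgSetoid A F1) ⟨w ++ [v], hwv⟩

/-- The safe vertices: classes of `Plays_{<3}`. -/
def sgSafe [DecidableEq V] (A : Arena V) (F1 : Set (Finset V)) : Set (SVert A F1) :=
  {a | ∃ (w : List V) (hw : w ∈ PlaysLe3 A F1),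
    w ∈ PlaysLt3 A F1 ∧ a = Quotient.mk (sgSetoid A F1) ⟨w, hw⟩}

theorem singleton_mem_lt3 [DecidableEq V] (A : Arena V) (F1 : Set (Finset V)) (v : V) :
    [v] ∈ PlaysLt3 A F1 := by
  refine ⟨⟨by simp, by simp [List.Chain']⟩, fun F _ x hx hpre => ?_⟩
  have hxv : x = [v] := by
    rcases hpre with ⟨t, ht⟩
    cases x with
    | nil => exact absurd rfl hx
    | cons a l =>
      rw [List.cons_append] at ht
      injection ht with h1 h2
      obtain ⟨rfl, -⟩ := List.append_eq_nil_iff.mp h2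
      rw [h1]
  subst hxv
  have hsc : scoreAcc F [v] = mgStep F (0, ∅) v := rfl
  rw [hsc, mgStep]
  split_ifs <;> simp

/-- The map `f(v) = [v]` from vertices of the Muller game to the safety game. -/
def sgF [DecidableEq V] (A : Arena V) (F1 : Set (Finset V)) (v : V) : SVert A F1 :=
  Quotient.mk (sgSetoid A F1) ⟨[v], Or.inl (singleton_mem_lt3 A F1 v)⟩

/-- A strategy of Player `i` in the safety game (it must move along an edge
whenever the current vertex belongs to Player `i` and has a successor). -/
def sgStratFor [DecidableEq V] (A : Arena V) (F1 : Set (Finset V)) (i : Fin 2)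
    (σ : List (SVert A F1) → SVert A F1 → SVert A F1) : Prop :=
  ∀ h a, a ∈ sgPos A F1 i → (∃ b, sgE A F1 a b) → sgE A F1 a (σ h a)

/-- A finite play (prefix) in the safety game consistent with the strategy `σ`
of Player `i`. -/
def sgConsList [DecidableEq V] (A : Arena V) (F1 : Set (Finset V)) (i : Fin 2)
    (σ : List (SVert A F1) → SVert A F1 → SVert A F1) (p : List (SVert A F1)) : Prop :=
  List.Chain' (sgE A F1) p ∧
    ∀ n (h : n + 1 < p.length), p[n]'(by omega) ∈ sgPos A F1 i →
      p[n + 1]'h = σ (p.take n) (p[n]'(by omega))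

/-- An infinite play in the safety game consistent with the strategy `σ` of Player `i`. -/
def sgConsInf [DecidableEq V] (A : Arena V) (F1 : Set (Finset V)) (i : Fin 2)
    (σ : List (SVert A F1) → SVert A F1 → SVert A F1) (ρ : ℕ → SVert A F1) : Prop :=
  (∀ n, sgE A F1 (ρ n) (ρ (n + 1))) ∧
    ∀ n, ρ n ∈ sgPos A F1 i → ρ (n + 1) = σ (prefixList ρ n) (ρ n)

/-- Winning region of Player 0 in the safety game: she has a strategy such that
every consistent (finite) play visits only safe vertices. -/
def sgWin0 [DecidableEq V] (A : Arena V) (F1 : Set (Finset V)) : Set (SVert A F1) :=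
  {a | ∃ σ, sgStratFor A F1 0 σ ∧
    ∀ p, sgConsList A F1 0 σ p → p.head? = some a → ∀ x ∈ p, x ∈ sgSafe A F1}

/-- Winning region of Player 1 in the safety game: he has a strategy such that
every maximal consistent play (infinite, or finite ending in a terminal vertex)
visits an unsafe vertex. -/
def sgWin1 [DecidableEq V] (A : Arena V) (F1 : Set (Finset V)) : Set (SVert A F1) :=
  {a | ∃ τ, sgStratFor A F1 1 τ ∧
    (∀ ρ, ρ 0 = a → sgConsInf A F1 1 τ ρ → ∃ n, ρ n ∉ sgSafe A F1) ∧
    (∀ p, sgConsList A F1 1 τ p → p.head? = some a →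
      ∀ (hne : p ≠ []), (∀ b, ¬sgE A F1 (p.getLast hne) b) → ∃ x ∈ p, x ∉ sgSafe A F1)}

/-- Winning region of Player `i` in the safety game. -/
def sgWin [DecidableEq V] (A : Arena V) (F1 : Set (Finset V)) (i : Fin 2) :
    Set (SVert A F1) :=
  if i = 0 then sgWin0 A F1 else sgWin1 A F1

/-- The order `≤_{F1}` lifted to `=_{F1}`-classes. -/
def sgLe [DecidableEq V] (A : Arena V) (F1 : Set (Finset V)) :
    SVert A F1 → SVert A F1 → Prop := fun a b =>
  ∃ p q : {w : List V // w ∈ PlaysLe3 A F1},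
    Quotient.mk (sgSetoid A F1) p = a ∧ Quotient.mk (sgSetoid A F1) q = b ∧
      ScoreLe F1 p.1 q.1

/-! ### Auxiliary lemmas for the proof of `safety_to_muller` -/

section AuxScore

variable [DecidableEq V]

theorem scoreAcc_concat (F : Finset V) (w : List V) (a : V) :
    scoreAcc F (w ++ [a]) = mgStep F (scoreAcc F w) a := by
  simp [scoreAcc, List.foldl_append]

theorem foldl_mgStep_snd_subset (F : Finset V) :
    ∀ (w : List V) (s : ℕ × Finset V), s.2 ⊆ F → (w.foldl (mgStep F) s).2 ⊆ F := by
  intro w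
  induction w with
  | nil => intro s hs; exact hs
  | cons a l ih =>
    intro s hs
    simp only [List.foldl_cons]
    apply ih
    unfold mgStep
    split_ifs with h1 h2
    · simp
    · exact Finset.insert_subset h1 hs
    · simp

theorem scoreAcc_snd_subset (F : Finset V) (w : List V) : (scoreAcc F w).2 ⊆ F :=
  foldl_mgStep_snd_subset F w _ (by simp [Finset.empty_subset])

theorem mgStep_fst_le (F : Finset V) (s : ℕ × Finset V) (a : V) :
    (mgStep F s a).1 ≤ s.1 + 1 := by
  unfold mgStep; split_ifs <;> simp

theorem scoreAcc_eq_of_scoreEq {𝓕 : Set (Finset V)} {w w' : List V}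
    (h : ScoreEq 𝓕 w w') {F : Finset V} (hF : F ∈ 𝓕) : scoreAcc F w = scoreAcc F w' := by
  rcases h.1.2 F hF with h1 | h1 <;> rcases h.2.2 F hF with h2 | h2
  · exfalso; omega
  · exfalso; have := h2.1; omega
  · exfalso; have := h1.1; omega
  · exact Prod.ext h1.1 (Finset.Subset.antisymm h1.2 h2.2)

theorem ScoreEq.concat {𝓕 : Set (Finset V)} {w w' : List V}
    (h : ScoreEq 𝓕 w w') (a : V) : ScoreEq 𝓕 (w ++ [a]) (w' ++ [a]) := by
  have hs : ∀ F ∈ 𝓕, scoreAcc F (w ++ [a]) = scoreAcc F (w' ++ [a]) := by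
    intro F hF
    rw [scoreAcc_concat, scoreAcc_concat, scoreAcc_eq_of_scoreEq h hF]
  constructor
  · exact ⟨by rw [List.getLast?_concat, List.getLast?_concat], fun F hF =>
      Or.inr ⟨congrArg Prod.fst (hs F hF), (hs F hF) ▸ subset_rfl⟩⟩
  · exact ⟨by rw [List.getLast?_concat, List.getLast?_concat], fun F hF =>
      Or.inr ⟨congrArg Prod.fst (hs F hF).symm, (hs F hF).symm ▸ subset_rfl⟩⟩

theorem concat_mem_le3 {A : Arena V} {F1 : Set (Finset V)} {w : List V} {u a : V}
    (hw : w ∈ PlaysLt3 A F1) (hlast : w.getLast? = some u) (hE : A.E u a) :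
    w ++ [a] ∈ PlaysLe3 A F1 := by
  have hne : w ≠ [] := hw.1.1
  have hchain : List.Chain' A.E (w ++ [a]) := by
    apply List.IsChain.append hw.1.2 (List.isChain_singleton a)
    intro x hx y hy
    rw [Option.mem_def, hlast, Option.some.injEq] at hx
    simp only [List.head?_cons, Option.mem_def, Option.some.injEq] at hy
    subst hx; subst hy
    exact hE
  have hpp : PlayPref A (w ++ [a]) := ⟨by simp, hchain⟩
  have hscore3 : MaxScoreLe F1 (w ++ [a]) 3 := by
    intro F hF x hx hpre
    rcases List.prefix_concat_iff.mp hpre with h | h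
    · subst h
      rw [scoreAcc_concat]
      have h1 := hw.2 F hF w hne List.prefix_rfl
      have h2 := mgStep_fst_le F (scoreAcc F w) a
      omega
    · exact le_trans (hw.2 F hF x hx h) (by omega)
  by_cases h2 : MaxScoreLe F1 (w ++ [a]) 2
  · exact Or.inl ⟨hpp, h2⟩
  · exact Or.inr ⟨hpp, w, a, rfl, hw.2, hscore3, h2⟩

theorem playsLt3_of_safe {A : Arena V} {F1 : Set (Finset V)} {w : List V}
    (hw : w ∈ PlaysLe3 A F1)
    (hs : (Quotient.mk (sgSetoid A F1) ⟨w, hw⟩ : SVert A F1) ∈ sgSafe A F1) :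
    w ∈ PlaysLt3 A F1 := by
  obtain ⟨w', hw', hlt', heq⟩ := hs
  have heqq : ScoreEq F1 w w' := Quotient.exact heq
  rcases hw with h | h
  · exact h
  obtain ⟨hpp, x, a, rfl, hx2, h3, hn2⟩ := h
  exfalso
  simp only [MaxScoreLe] at hn2
  push_neg at hn2
  obtain ⟨F, hF, y, hy, hpre, hsc⟩ := hn2
  rcases List.prefix_concat_iff.mp hpre with h | h
  · subst h
    have hw'2 := hlt'.2 F hF w' hlt'.1.1 List.prefix_rfl
    have hq : (scoreAcc F (x ++ [a])).1 = (scoreAcc F w').1 :=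
      congrArg Prod.fst (scoreAcc_eq_of_scoreEq heqq hF)
    omega
  · exact absurd (hx2 F hF y hy h) (by omega)

end AuxScore

section AuxPrefix

theorem prefixList_succ (ρ : ℕ → V) (n : ℕ) :
    prefixList ρ (n + 1) = prefixList ρ n ++ [ρ n] := by
  simp [prefixList, List.range_succ]

theorem prefixList_one (ρ : ℕ → V) : prefixList ρ 1 = [ρ 0] := by
  rw [prefixList, List.range_succ, List.range_zero]
  rfl

theorem prefixList_length (ρ : ℕ → V) (n : ℕ) : (prefixList ρ n).length = n := by
  simp [prefixList]

theorem prefixList_getLast? (ρ : ℕ → V) (n : ℕ) :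
    (prefixList ρ (n + 1)).getLast? = some (ρ n) := by
  rw [prefixList_succ]; exact List.getLast?_concat

theorem prefixList_take (ρ : ℕ → V) {k n : ℕ} (h : k ≤ n) :
    (prefixList ρ n).take k = prefixList ρ k := by
  simp only [prefixList]
  rw [← List.map_take, List.take_range, Nat.min_eq_left h]

theorem prefixList_ne_nil (ρ : ℕ → V) (n : ℕ) : prefixList ρ (n + 1) ≠ [] := by
  apply List.ne_nil_of_length_pos
  rw [prefixList_length]
  omega

end AuxPrefix

section AuxInf

theorem eventually_mem_infSet [Fintype V] (ρ : ℕ → V) :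
    ∃ N, ∀ n, N ≤ n → ρ n ∈ infSet ρ := by
  classical
  have hch : ∀ u : V, ∃ N, u ∉ infSet ρ → ∀ n, N ≤ n → ρ n ≠ u := by
    intro u
    by_cases h : u ∈ infSet ρ
    · exact ⟨0, fun hc => absurd h hc⟩
    · simp only [infSet, Set.mem_setOf_eq] at h
      push_neg at h
      obtain ⟨N, hN⟩ := h
      exact ⟨N, fun _ n hn => hN n hn⟩
  choose f hf using hch
  refine ⟨Finset.univ.sup f, fun n hn => ?_⟩
  by_contra hc
  exact hf (ρ n) hc n (le_trans (Finset.le_sup (Finset.mem_univ (ρ n))) hn) rfl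

theorem isLoop_infSet [Fintype V] {A : Arena V} {ρ : ℕ → V} (hρ : IsPlay A ρ) :
    IsLoop A (infSet ρ) := by
  obtain ⟨N, hN⟩ := eventually_mem_infSet ρ
  intro u hu u' hu'
  obtain ⟨n, hn, rfl⟩ := hu N
  obtain ⟨m, hm, rfl⟩ := hu' n
  clear hu hu'
  obtain ⟨k, rfl⟩ := Nat.exists_eq_add_of_le hm
  clear hm
  induction k with
  | zero => exact Relation.ReflTransGen.refl
  | succ k ih =>
    exact ih.tail ⟨hρ (n + k), hN _ (by omega), hN _ (by omega)⟩

end AuxInf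

section AuxUnbounded

variable [DecidableEq V]

theorem scoreAcc_prefixList_succ (F : Finset V) (ρ : ℕ → V) (m : ℕ) :
    scoreAcc F (prefixList ρ (m + 1)) = mgStep F (scoreAcc F (prefixList ρ m)) (ρ m) := by
  rw [prefixList_succ, scoreAcc_concat]

theorem mgStep_of_mem {F : Finset V} {s : ℕ × Finset V} {a : V} (ha : a ∈ F) :
    (mgStep F s a).1 = s.1 + 1 ∨
      ((mgStep F s a).1 = s.1 ∧ s.2 ⊆ (mgStep F s a).2 ∧ a ∈ (mgStep F s a).2) := by
  unfold mgStep
  rw [if_pos ha]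
  split_ifs with h
  · exact Or.inl rfl
  · exact Or.inr ⟨rfl, Finset.subset_insert _ _, Finset.mem_insert_self _ _⟩

theorem scoreAcc_snd_ne (F : Finset V) (hFne : F.Nonempty) (w : List V) :
    (scoreAcc F w).2 ≠ F := by
  induction w using List.reverseRecOn with
  | nil => simpa [scoreAcc] using hFne.ne_empty.symm
  | append_singleton l a ih =>
    rw [scoreAcc_concat]
    unfold mgStep
    split_ifs with h1 h2
    · exact hFne.ne_empty.symm
    · intro hcon
      simp only at hcon
      by_cases hm : a ∈ (scoreAcc F l).2
      · rw [Finset.insert_eq_self.mpr hm] at hcon; exact ih hcon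
      · apply h2
        apply Finset.Subset.antisymm
        · intro x hx
          refine Finset.mem_erase.mpr ⟨fun hxa => hm (hxa ▸ hx), ?_⟩
          rw [← hcon]
          exact Finset.mem_insert_of_mem hx
        · intro x hx
          obtain ⟨hxa, hxF⟩ := Finset.mem_erase.mp hx
          rw [← hcon] at hxF
          rcases Finset.mem_insert.mp hxF with h | h
          · exact absurd h hxa
          · exact h
    · exact hFne.ne_empty.symm

theorem score_increases {F : Finset V} {ρ : ℕ → V} {N : ℕ}
    (hmem : ∀ n, N ≤ n → ρ n ∈ F)
    (hvis : ∀ u ∈ F, ∀ n, ∃ m, n ≤ m ∧ ρ m = u)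
    (hFne : F.Nonempty) :
    ∀ n, N ≤ n → ∃ m, n ≤ m ∧
      (scoreAcc F (prefixList ρ n)).1 < (scoreAcc F (prefixList ρ m)).1 := by
  intro n hn
  by_contra hcon
  push_neg at hcon
  set P : ℕ → ℕ × Finset V := fun m => scoreAcc F (prefixList ρ m) with hP
  have hstep : ∀ m, N ≤ m → (P (m + 1)).1 = (P m).1 + 1 ∨
      ((P (m + 1)).1 = (P m).1 ∧ (P m).2 ⊆ (P (m + 1)).2 ∧ ρ m ∈ (P (m + 1)).2) := by
    intro m hm
    have h1 : P (m + 1) = mgStep F (P m) (ρ m) := scoreAcc_prefixList_succ F ρ m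
    rw [h1]
    exact mgStep_of_mem (hmem m hm)
  have hmono : ∀ m, n ≤ m → (P n).1 ≤ (P m).1 := by
    intro m hm
    induction m, hm using Nat.le_induction with
    | base => exact le_refl _
    | succ m hm ih =>
      rcases hstep m (le_trans hn hm) with h | h
      · omega
      · omega
  have hconst : ∀ m, n ≤ m → (P m).1 = (P n).1 := fun m hm =>
    le_antisymm (hcon m hm) (hmono m hm)
  have hsub : ∀ m, n ≤ m → (P m).2 ⊆ (P (m + 1)).2 ∧ ρ m ∈ (P (m + 1)).2 := by
    intro m hm
    rcases hstep m (le_trans hn hm) with h | h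
    · exfalso
      have e1 := hconst m hm
      have e2 := hconst (m + 1) (by omega)
      omega
    · exact ⟨h.2.1, h.2.2⟩
  have hsub2 : ∀ m m', n ≤ m → m ≤ m' → (P m).2 ⊆ (P m').2 := by
    intro m m' hm hmm
    induction m', hmm using Nat.le_induction with
    | base => exact subset_rfl
    | succ m' hm' ih => exact ih.trans (hsub m' (le_trans hm hm')).1
  have hcoverset : ∀ s : Finset V, s ⊆ F → ∃ m, n ≤ m ∧ s ⊆ (P m).2 := by
    intro s
    induction s using Finset.induction_on with
    | empty => intro _; exact ⟨n, le_refl n, by simp [Finset.empty_subset]⟩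
    | @insert a s ha ih =>
      intro hs
      obtain ⟨m, hm, hsm⟩ := ih (fun x hx => hs (Finset.mem_insert_of_mem hx))
      obtain ⟨m', hm', hρ⟩ := hvis a (hs (Finset.mem_insert_self a s)) m
      refine ⟨m' + 1, by omega, ?_⟩
      intro x hx
      rcases Finset.mem_insert.mp hx with rfl | hx
      · have := (hsub m' (le_trans hm hm')).2
        rwa [hρ] at this
      · exact hsub2 m (m' + 1) hm (by omega) (hsm hx)
  obtain ⟨M, hM, hMF⟩ := hcoverset F subset_rfl
  exact scoreAcc_snd_ne F hFne (prefixList ρ M)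
    (Finset.Subset.antisymm (scoreAcc_snd_subset F _) hMF)

theorem score_unbounded {F : Finset V} {ρ : ℕ → V} {N : ℕ}
    (hmem : ∀ n, N ≤ n → ρ n ∈ F)
    (hvis : ∀ u ∈ F, ∀ n, ∃ m, n ≤ m ∧ ρ m = u)
    (hFne : F.Nonempty) (k : ℕ) :
    ∃ m, k ≤ (scoreAcc F (prefixList ρ m)).1 := by
  have key : ∀ k : ℕ, ∃ m, N ≤ m ∧ k ≤ (scoreAcc F (prefixList ρ m)).1 := by
    intro k
    induction k with
    | zero => exact ⟨N, le_refl N, Nat.zero_le _⟩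
    | succ k ih =>
      obtain ⟨m, hNm, hm⟩ := ih
      obtain ⟨m', hmm', hlt⟩ := score_increases hmem hvis hFne m hNm
      exact ⟨m', le_trans hNm hmm', by omega⟩
  obtain ⟨m, _, hm⟩ := key k
  exact ⟨m, hm⟩

end AuxUnbounded

section AuxStrat

variable [DecidableEq V]

open Classical in
/-- The class of a word, if it lies in `Plays_{≤3}` (default `f(v)` otherwise). -/
noncomputable def cls (A : Arena V) (F1 : Set (Finset V)) (v : V) (w : List V) :
    SVert A F1 :=
  if h : w ∈ PlaysLe3 A F1 then Quotient.mk (sgSetoid A F1) ⟨w, h⟩ else sgF A F1 v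

theorem cls_eq {A : Arena V} {F1 : Set (Finset V)} (v : V) {w : List V}
    (h : w ∈ PlaysLe3 A F1) :
    cls A F1 v w = Quotient.mk (sgSetoid A F1) ⟨w, h⟩ := dif_pos h

/-- The history of classes corresponding to a Muller-game history. -/
noncomputable def histCls (A : Arena V) (F1 : Set (Finset V)) (v : V)
    (w : List V) (u : V) : List (SVert A F1) :=
  (List.range w.length).map fun k => cls A F1 v ((w ++ [u]).take (k + 1))

open Classical in
/-- The Muller-game strategy simulating the safety-game strategy `σS`. -/
noncomputable def simStrat (A : Arena V) (F1 : Set (Finset V)) (v : V)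
    (σS : List (SVert A F1) → SVert A F1 → SVert A F1) (w : List V) (u : V) : V :=
  if h : ∃ a, A.E u a ∧
      cls A F1 v ((w ++ [u]) ++ [a]) = σS (histCls A F1 v w u) (cls A F1 v (w ++ [u]))
  then h.choose else (A.succ u).choose

theorem simStrat_isStrat (A : Arena V) (F1 : Set (Finset V)) (v : V)
    (σS : List (SVert A F1) → SVert A F1 → SVert A F1) :
    IsStrat A (simStrat A F1 v σS) := by
  intro w u
  unfold simStrat
  split_ifs with h
  · exact h.choose_spec.1
  · exact (A.succ u).choose_spec

theorem histCls_prefixList (A : Arena V) (F1 : Set (Finset V)) (v : V)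
    (ρ : ℕ → V) (m : ℕ) :
    histCls A F1 v (prefixList ρ m) (ρ m) =
      (List.range m).map (fun k => cls A F1 v (prefixList ρ (k + 1))) := by
  unfold histCls
  rw [prefixList_length]
  apply List.map_congr_left
  intro k hk
  have hk' : k < m := List.mem_range.mp hk
  rw [← prefixList_succ, prefixList_take ρ (by omega : k + 1 ≤ m + 1)]

theorem simStrat_spec {A : Arena V} {F1 : Set (Finset V)} {v : V}
    {σS : List (SVert A F1) → SVert A F1 → SVert A F1}
    (hstrat : sgStratFor A F1 0 σS) {w : List V} {u : V}
    (hfull : w ++ [u] ∈ PlaysLt3 A F1)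
    (hpos : (Quotient.mk (sgSetoid A F1) ⟨w ++ [u], Or.inl hfull⟩ : SVert A F1)
      ∈ sgPos A F1 0) :
    A.E u (simStrat A F1 v σS w u) ∧
      ((w ++ [u]) ++ [simStrat A F1 v σS w u]) ∈ PlaysLe3 A F1 ∧
      cls A F1 v ((w ++ [u]) ++ [simStrat A F1 v σS w u]) =
        σS (histCls A F1 v w u) (cls A F1 v (w ++ [u])) := by
  have hlastfull : (w ++ [u]).getLast? = some u := List.getLast?_concat
  obtain ⟨a0, ha0⟩ := A.succ u
  have hb0 : (w ++ [u]) ++ [a0] ∈ PlaysLe3 A F1 := concat_mem_le3 hfull hlastfull ha0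
  have hclsfull : cls A F1 v (w ++ [u]) =
      Quotient.mk (sgSetoid A F1) ⟨w ++ [u], Or.inl hfull⟩ := cls_eq v (Or.inl hfull)
  have hex0 : ∃ b, sgE A F1 (cls A F1 v (w ++ [u])) b := by
    rw [hclsfull]
    exact ⟨_, w ++ [u], Or.inl hfull, a0, hb0, u, hfull, hlastfull, ha0, rfl, rfl⟩
  have hpos' : cls A F1 v (w ++ [u]) ∈ sgPos A F1 0 := by rw [hclsfull]; exact hpos
  have hedge := hstrat (histCls A F1 v w u) _ hpos' hex0
  obtain ⟨w₀, hw₀, v₀, hwv₀, u₀, hw₀lt, hlast₀, hE₀, ha, hb⟩ := hedge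
  rw [hclsfull] at ha
  have heq : ScoreEq F1 (w ++ [u]) w₀ := Quotient.exact ha
  have hu : u₀ = u := by
    have h1 := heq.1.1
    rw [hlastfull, hlast₀] at h1
    exact (Option.some.inj h1).symm
  rw [hu] at hE₀
  have h2 : (w ++ [u]) ++ [v₀] ∈ PlaysLe3 A F1 := concat_mem_le3 hfull hlastfull hE₀
  have hcls2 : cls A F1 v ((w ++ [u]) ++ [v₀]) =
      σS (histCls A F1 v w u) (cls A F1 v (w ++ [u])) := by
    rw [cls_eq v h2, hb]
    exact Quotient.sound (heq.concat v₀)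
  have hex : ∃ a, A.E u a ∧ cls A F1 v ((w ++ [u]) ++ [a]) =
      σS (histCls A F1 v w u) (cls A F1 v (w ++ [u])) := ⟨v₀, hE₀, hcls2⟩
  have hssdef : simStrat A F1 v σS w u = hex.choose := dif_pos hex
  obtain ⟨hEc, hclsc⟩ := hex.choose_spec
  rw [hssdef]
  exact ⟨hEc, concat_mem_le3 hfull hlastfull hEc, hclsc⟩

end AuxStrat

/-- If `f(v) = [v]` is in Player 0's winning region of the
associated safety game, then `v ∈ W_0(G)` in the Muller game. -/
theorem safety_to_muller [Fintype V] [DecidableEq V] (A : Arena V)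
    (Fam : Fin 2 → Set (Finset V))
    (hcover : ∀ C : Finset V, C ∈ Fam 0 ∪ Fam 1 ↔ IsLoop A (↑C : Set V))
    (hdisj : Disjoint (Fam 0) (Fam 1)) (v : V)
    (hv : sgF A (Fam 1) v ∈ sgWin0 A (Fam 1)) :
    v ∈ MullerWinRegion A Fam 0 := by
  classical
  obtain ⟨σS, hstrat, hsafe⟩ := hv
  refine ⟨simStrat A (Fam 1) v σS, simStrat_isStrat A (Fam 1) v σS, ?_⟩
  intro ρ hρ0 hcons
  have hplay : IsPlay A ρ := hcons.1
  have hmove : ∀ n, ρ n ∈ A.V0 →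
      ρ (n + 1) = simStrat A (Fam 1) v σS (prefixList ρ n) (ρ n) := by
    intro n hn
    exact hcons.2 n (by simpa [Arena.pos] using hn)
  have pfx0 : prefixList ρ 1 = [v] := by rw [prefixList_one, hρ0]
  -- main invariant: all prefixes stay in Plays_{<3}
  have main : ∀ n, ∀ k, k ≤ n → prefixList ρ (k + 1) ∈ PlaysLt3 A (Fam 1) := by
    intro n
    induction n with
    | zero =>
      intro k hk
      obtain rfl : k = 0 := Nat.le_zero.mp hk
      rw [show (0 : ℕ) + 1 = 1 from rfl, pfx0]
      exact singleton_mem_lt3 A (Fam 1) v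
    | succ n ih =>
      intro k hk
      rcases Nat.lt_or_ge k (n + 1) with hlt | hge
      · exact ih k (by omega)
      obtain rfl : k = n + 1 := by omega
      set c : ℕ → SVert A (Fam 1) := fun k => cls A (Fam 1) v (prefixList ρ (k + 1))
        with hc
      have hle : prefixList ρ (n + 2) ∈ PlaysLe3 A (Fam 1) := by
        rw [prefixList_succ ρ (n + 1)]
        exact concat_mem_le3 (ih n le_rfl) (prefixList_getLast? ρ n) (hplay n)
      have hedge : ∀ k, k ≤ n → sgE A (Fam 1) (c k) (c (k + 1)) := by
        intro k hkn
        have h1 : prefixList ρ (k + 1) ∈ PlaysLt3 A (Fam 1) := ih k hkn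
        have h2 : prefixList ρ (k + 2) ∈ PlaysLe3 A (Fam 1) := by
          rcases Nat.lt_or_ge k n with h | h
          · exact Or.inl (ih (k + 1) (by omega))
          · obtain rfl : k = n := by omega
            exact hle
        have hcat : prefixList ρ (k + 2) = prefixList ρ (k + 1) ++ [ρ (k + 1)] :=
          prefixList_succ ρ (k + 1)
        simp only [hc]
        rw [hcat] at h2
        rw [cls_eq v (Or.inl h1), show prefixList ρ (k + 1 + 1) = prefixList ρ (k + 1) ++ [ρ (k + 1)] from prefixList_succ ρ (k + 1), cls_eq v h2]
        exact ⟨_, Or.inl h1, _, h2, ρ k, h1, prefixList_getLast? ρ k, hplay k, rfl, rfl⟩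
      have hchain : List.Chain' (sgE A (Fam 1)) ((List.range (n + 2)).map c) := by
        refine (List.isChain_map c).2 ?_
        rw [List.isChain_range_succ]
        intro m hm
        exact hedge m (by omega)
      have hconsList : sgConsList A (Fam 1) 0 σS ((List.range (n + 2)).map c) := by
        refine ⟨hchain, ?_⟩
        intro m hm hpos
        have hm2 : m + 1 < n + 2 := by simpa using hm
        have hmn : m ≤ n := by omega
        simp only [List.getElem_map, List.getElem_range] at hpos ⊢
        rw [← List.map_take, List.take_range, Nat.min_eq_left (by omega : m ≤ n + 2)]
        -- extract ρ m ∈ V0 from hpos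
        have hfull : prefixList ρ m ++ [ρ m] ∈ PlaysLt3 A (Fam 1) := by
          rw [← prefixList_succ]
          exact ih m hmn
        have hcm : c m = Quotient.mk (sgSetoid A (Fam 1))
            ⟨prefixList ρ m ++ [ρ m], Or.inl hfull⟩ := by
          simp only [hc]
          rw [show prefixList ρ (m + 1) = prefixList ρ m ++ [ρ m] from
            prefixList_succ ρ m, cls_eq v (Or.inl hfull)]
        have hV0 : ρ m ∈ A.V0 := by
          simp only [sgPos, if_pos rfl, sgPos0, Set.mem_setOf_eq] at hpos
          obtain ⟨x, hxV0, hxlast⟩ := hpos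
          rw [hcm] at hxlast
          have : (prefixList ρ m ++ [ρ m]).getLast? = some x := hxlast
          rw [List.getLast?_concat] at this
          obtain rfl : ρ m = x := Option.some.inj this
          exact hxV0
        have hpos' : (Quotient.mk (sgSetoid A (Fam 1))
            ⟨prefixList ρ m ++ [ρ m], Or.inl hfull⟩ : SVert A (Fam 1))
            ∈ sgPos A (Fam 1) 0 := by
          simp only [sgPos, if_pos rfl, sgPos0, Set.mem_setOf_eq]
          refine ⟨ρ m, hV0, ?_⟩
          show (prefixList ρ m ++ [ρ m]).getLast? = some (ρ m)
          exact List.getLast?_concat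
        obtain ⟨hEs, h2s, hscls⟩ := simStrat_spec hstrat hfull hpos'
        have hmv := hmove m hV0
        rw [← hmv] at hscls
        calc c (m + 1)
            = cls A (Fam 1) v ((prefixList ρ m ++ [ρ m]) ++ [ρ (m + 1)]) := by
              simp only [hc]
              rw [show prefixList ρ (m + 1 + 1) =
                  prefixList ρ (m + 1) ++ [ρ (m + 1)] from prefixList_succ ρ (m + 1),
                show prefixList ρ (m + 1) = prefixList ρ m ++ [ρ m] from
                  prefixList_succ ρ m]
          _ = σS (histCls A (Fam 1) v (prefixList ρ m) (ρ m))
                (cls A (Fam 1) v (prefixList ρ m ++ [ρ m])) := hscls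
          _ = σS ((List.range m).map c) (c m) := by
              rw [histCls_prefixList]
              simp only [hc]
              rw [show prefixList ρ (m + 1) = prefixList ρ m ++ [ρ m] from
                prefixList_succ ρ m]
      have hhead : (((List.range (n + 2)).map c)).head? = some (sgF A (Fam 1) v) := by
        rw [List.range_succ_eq_map]
        simp only [List.map_cons, List.head?_cons]
        congr 1
        simp only [hc]
        rw [show (0 : ℕ) + 1 = 1 from rfl, pfx0,
          cls_eq v (Or.inl (singleton_mem_lt3 A (Fam 1) v))]
        rfl
      have hall := hsafe ((List.range (n + 2)).map c) hconsList hhead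
      have hmem : c (n + 1) ∈ (List.range (n + 2)).map c :=
        List.mem_map_of_mem (List.mem_range.mpr (by omega))
      have hsafe' := hall _ hmem
      have hcn : c (n + 1) = Quotient.mk (sgSetoid A (Fam 1))
          ⟨prefixList ρ (n + 2), hle⟩ := by
        simp only [hc]
        exact cls_eq v hle
      rw [hcn] at hsafe'
      exact playsLt3_of_safe hle hsafe'
  have hLt : ∀ k, prefixList ρ (k + 1) ∈ PlaysLt3 A (Fam 1) := fun k => main k k le_rfl
  -- conclude: the infinity set is in Fam 0
  have hCset : ((infFinset ρ : Finset V) : Set V) = infSet ρ := Set.Finite.coe_toFinset _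
  have hloop : IsLoop A ((infFinset ρ : Finset V) : Set V) := by
    rw [hCset]; exact isLoop_infSet hplay
  rcases (hcover (infFinset ρ)).mpr hloop with h0 | h1
  · exact h0
  exfalso
  obtain ⟨N, hN⟩ := eventually_mem_infSet ρ
  have hmemC : ∀ n, N ≤ n → ρ n ∈ infFinset ρ := by
    intro n hn
    have := hN n hn
    rw [← hCset] at this
    exact this
  have hvis : ∀ u ∈ infFinset ρ, ∀ n, ∃ m, n ≤ m ∧ ρ m = u := by
    intro u hu n
    have : u ∈ infSet ρ := by
      rw [← hCset]
      exact hu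
    exact this n
  have hFne : (infFinset ρ).Nonempty := ⟨ρ N, hmemC N le_rfl⟩
  obtain ⟨m, hm3⟩ := score_unbounded hmemC hvis hFne 3
  have hm1 : m ≠ 0 := by
    intro h
    subst h
    simp [prefixList, scoreAcc] at hm3
  obtain ⟨j, rfl⟩ := Nat.exists_eq_succ_of_ne_zero hm1
  simp only [Nat.succ_eq_add_one] at hm3
  have hb := (hLt j).2 (infFinset ρ) h1 (prefixList ρ (j + 1))
    (prefixList_ne_nil ρ j) List.prefix_rfl
  omega
end

section
/- Let w ∈ V⁺ be a nonempty finite word with LAR(w) = v_k v_{k−1} ⋯ v_1, and let F ⊆ V. If Score_F(w) = 0, then Acc_F(w) = {v_1, …, v_i} for the maximal i such that {v_1, …, v_i} ⊆ F, and Acc_F(w) = ∅ if no such i exists. -/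
variable {V : Type*}

variable {V : Type*}

/-- One step of the latest-appearance-record update. -/
def larStep [DecidableEq V] (ℓ : List V) (v : V) : List V := ℓ.erase v ++ [v]

/-- The latest appearance record `LAR(w)` of a finite word. -/
def LARof [DecidableEq V] (w : List V) : List V := w.foldl larStep []

lemma erase_reverse' [DecidableEq V] {l : List V} (hl : l.Nodup) (v : V) :
    (l.erase v).reverse = l.reverse.erase v := by
  induction l with
  | nil => simp
  | cons a t ih =>
    rcases List.nodup_cons.mp hl with ⟨ha, ht⟩
    by_cases hav : a = v
    · subst hav
      simp [List.erase_cons_head, List.erase_append, (by simpa using ha : a ∉ t.reverse)]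
    · rw [List.erase_cons_tail (by simpa using hav)]
      by_cases hvt : v ∈ t
      · simp [List.erase_append, hvt, ih ht]
      · rw [List.erase_of_not_mem (by simp [hvt, Ne.symm hav]), List.erase_of_not_mem]
        simp [hvt, Ne.symm hav]

lemma takeWhile_erase' [DecidableEq V] (p : V → Bool) {v : V} (hv : p v = true) (r : List V) :
    insert v ((r.erase v).takeWhile p).toFinset = insert v (r.takeWhile p).toFinset := by
  induction r with
  | nil => simp
  | cons a t ih =>
    by_cases hav : a = v
    · subst hav
      simp [List.erase_cons_head, List.takeWhile_cons_of_pos hv, Finset.insert_idem]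
    · rw [List.erase_cons_tail (by simpa using hav)]
      by_cases hpa : p a = true
      · rw [List.takeWhile_cons_of_pos hpa, List.takeWhile_cons_of_pos hpa]
        simp only [List.toFinset_cons]
        rw [Finset.insert_comm, ih, Finset.insert_comm]
      · rw [List.takeWhile_cons_of_neg (by simp [hpa]), List.takeWhile_cons_of_neg (by simp [hpa])]

lemma le_takeWhile_iff' (p : V → Bool) (l : List V) (i : ℕ) (hi : i ≤ l.length) :
    (∀ x ∈ l.take i, p x = true) ↔ i ≤ (l.takeWhile p).length := by
  induction l generalizing i with
  | nil => simp at hi; simp [hi]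
  | cons a t ih =>
    cases i with
    | zero => simp
    | succ n =>
      simp only [List.take_succ_cons, List.mem_cons, forall_eq_or_imp]
      by_cases hpa : p a = true
      · rw [List.takeWhile_cons_of_pos hpa]
        simp only [List.length_cons, Nat.succ_le_succ_iff]
        simp [hpa, ih n (by simpa using hi)]
      · rw [List.takeWhile_cons_of_neg (by simp [hpa])]
        simp [hpa]

lemma LARof_nodup [DecidableEq V] (w : List V) : (LARof w).Nodup := by
  suffices h : ∀ (u : List V) (ℓ : List V), ℓ.Nodup → (u.foldl larStep ℓ).Nodup by
    exact h w [] List.nodup_nil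
  intro u
  induction u with
  | nil => intro ℓ h; exact h
  | cons a t ih =>
    intro ℓ h
    refine ih _ ?_
    have h1 : (ℓ.erase a).Nodup := h.erase a
    have h2 : a ∉ ℓ.erase a := fun hm => ((h.mem_erase_iff).mp hm).1 rfl
    simpa [larStep, List.nodup_append] using ⟨h1, fun x hx hxa => by subst hxa; exact h2 hx⟩

lemma scoreAcc_append [DecidableEq V] (F : Finset V) (u : List V) (v : V) :
    scoreAcc F (u ++ [v]) = mgStep F (scoreAcc F u) v := by
  simp [scoreAcc]

lemma LARof_append [DecidableEq V] (u : List V) (v : V) :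
    LARof (u ++ [v]) = larStep (LARof u) v := by
  simp [LARof]

lemma acc_inv [DecidableEq V] (F : Finset V) (w : List V) (h0 : (scoreAcc F w).1 = 0) :
    (scoreAcc F w).2
      = ((LARof w).reverse.takeWhile (fun x => decide (x ∈ F))).toFinset := by
  induction w using List.reverseRecOn with
  | nil => simp [scoreAcc, LARof]
  | append_singleton u v ih =>
    rw [scoreAcc_append] at h0 ⊢
    rw [LARof_append]
    set p : V → Bool := fun x => decide (x ∈ F) with hp
    by_cases hv : v ∈ F
    · by_cases hA : (scoreAcc F u).2 = F.erase v
      · exfalso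
        rw [mgStep, if_pos hv, if_pos hA] at h0
        simp at h0
      · rw [mgStep, if_pos hv, if_neg hA] at h0 ⊢
        have hs : (scoreAcc F u).1 = 0 := h0
        have hIH := ih hs
        have hrev : (larStep (LARof u) v).reverse
            = v :: ((LARof u).reverse.erase v) := by
          simp [larStep, erase_reverse' (LARof_nodup u) v]
        rw [hrev, List.takeWhile_cons_of_pos (by simp [hp, hv]), List.toFinset_cons]
        rw [takeWhile_erase' p (by simp [hp, hv]) (LARof u).reverse, ← hIH]
    · rw [mgStep, if_neg hv]
      have hrev : (larStep (LARof u) v).reverse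
          = v :: ((LARof u).erase v).reverse := by simp [larStep]
      rw [hrev, List.takeWhile_cons_of_neg (by simp [hp, hv])]
      simp

/-- If `LAR(w) = v_k ⋯ v_1` and `Score_F(w) = 0`, then
`Acc_F(w) = {v_1, …, v_i}` for the maximal `i` with `{v_1, …, v_i} ⊆ F`, and
`Acc_F(w) = ∅` if no such `i` exists. -/
theorem acc_of_score_zero [DecidableEq V] (w : List V) (hw : w ≠ []) (F : Finset V)
    (h0 : (scoreAcc F w).1 = 0) :
    ((∃ i, 1 ≤ i ∧ i ≤ (LARof w).length ∧
        ((LARof w).drop ((LARof w).length - i)).toFinset ⊆ F) →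
      ∃ i, 1 ≤ i ∧ i ≤ (LARof w).length ∧
        ((LARof w).drop ((LARof w).length - i)).toFinset ⊆ F ∧
        (∀ j, 1 ≤ j → j ≤ (LARof w).length →
          ((LARof w).drop ((LARof w).length - j)).toFinset ⊆ F → j ≤ i) ∧
        (scoreAcc F w).2 = ((LARof w).drop ((LARof w).length - i)).toFinset) ∧
    ((¬∃ i, 1 ≤ i ∧ i ≤ (LARof w).length ∧
        ((LARof w).drop ((LARof w).length - i)).toFinset ⊆ F) →
      (scoreAcc F w).2 = ∅) := by
  set ℓ := LARof w with hℓ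
  set p : V → Bool := fun x => decide (x ∈ F) with hp
  set r := ℓ.reverse with hr
  set t := r.takeWhile p with ht
  have hacc : (scoreAcc F w).2 = t.toFinset := acc_inv F w h0
  have hlen : r.length = ℓ.length := ℓ.length_reverse
  have hS : ∀ i, (ℓ.drop (ℓ.length - i)).toFinset = (r.take i).toFinset := by
    intro i
    rw [hr, List.take_reverse, List.toFinset_reverse]
  have key : ∀ i, i ≤ ℓ.length →
      ((ℓ.drop (ℓ.length - i)).toFinset ⊆ F ↔ i ≤ t.length) := by
    intro i hi
    rw [hS, ht, ← le_takeWhile_iff' p r i (by rw [hlen]; exact hi)]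
    constructor
    · intro h x hx
      simpa [hp] using h (List.mem_toFinset.mpr hx)
    · intro h x hx
      simpa [hp] using h x (List.mem_toFinset.mp hx)
  have htl : t.length ≤ ℓ.length := by
    rw [← hlen]; exact (List.takeWhile_prefix p).length_le
  have htake : r.take t.length = t :=
    (List.prefix_iff_eq_take.mp (List.takeWhile_prefix p)).symm
  have htF : (ℓ.drop (ℓ.length - t.length)).toFinset ⊆ F := by
    rw [hS, htake]
    intro x hx
    simpa [hp] using List.mem_takeWhile_imp (List.mem_toFinset.mp hx)
  constructor
  · rintro ⟨i, hi1, hi2, hiF⟩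
    have hit : i ≤ t.length := (key i hi2).mp hiF
    refine ⟨t.length, le_trans hi1 hit, htl, htF, ?_, ?_⟩
    · intro j _ hj2 hjF
      exact (key j hj2).mp hjF
    · rw [hacc, hS, htake]
  · intro hne
    rw [hacc]
    rcases Nat.eq_zero_or_pos t.length with h | h
    · rw [List.length_eq_zero_iff.mp h]; simp
    · exact absurd ⟨t.length, h, htl, htF⟩ hne
end
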